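/- Let p be a prime, h ≥ 1, and set b_ℓ = (p^{2ℓ+1} + 1)/(p + 1) for 0 ≤ ℓ ≤ h-1. For an integer j with 0 ≤ j ≤ p^h - 1 having p-adic expansion j = a₁ + a₂ p + ⋯ + a_h p^{h-1} (0 ≤ a_i < p), define B(j) = Σ_{ℓ=1}^{h} a_ℓ b_{ℓ-1} p^{h-ℓ}. If 1 ≤ j ≤ p^h - 1 and s is the smallest index (1 ≤ s ≤ h) such that the coefficient a_s in the p-adic expansion of j-1 satisfies a_s < p - 1 (so j - 1 = (p-1)(1 + p + ⋯ + p^{s-2}) + a_s p^{s-1} + ⋯), then B(j) - B(j-1) = p^{h-s}. -/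

import Mathlib

/-- with `b ℓ = (p^(2ℓ+1)+1)/(p+1)` and
`B j = ∑_{ℓ=0}^{h-1} a_{ℓ+1}(j) · b ℓ · p^(h-1-ℓ)` (where `a_{ℓ+1}(j) = (j / p^ℓ) % p` are the
p-adic digits of `j`), if `s` is the smallest index `1 ≤ s ≤ h` such that the digit `a_s`
of `j - 1` is `< p - 1`, then `B j = B (j-1) + p^(h-s)`. -/
theorem stmt_4 (p : ℕ) (hp : p.Prime) (h : ℕ) (hh : 1 ≤ h)
    (b : ℕ → ℕ) (hb : ∀ ℓ, b ℓ = (p ^ (2 * ℓ + 1) + 1) / (p + 1))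
    (B : ℕ → ℕ)
    (hB : ∀ j, B j = ∑ ℓ ∈ Finset.range h, ((j / p ^ ℓ) % p) * b ℓ * p ^ (h - 1 - ℓ))
    (j s : ℕ) (hj1 : 1 ≤ j) (hj2 : j ≤ p ^ h - 1)
    (hs1 : 1 ≤ s) (hs2 : s ≤ h)
    (hsdig : ((j - 1) / p ^ (s - 1)) % p < p - 1)
    (hsmin : ∀ t, 1 ≤ t → t < s → ((j - 1) / p ^ (t - 1)) % p = p - 1) :
    B j = B (j - 1) + p ^ (h - s) := by
  have hp2 : 2 ≤ p := hp.two_le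
  -- exact division
  have hL1 : ∀ ℓ, (p + 1) * b ℓ = p ^ (2 * ℓ + 1) + 1 := by
    intro ℓ
    have hdvd : p + 1 ∣ p ^ (2 * ℓ + 1) + 1 := by
      simpa using (Odd.nat_add_dvd_pow_add_pow p 1 (odd_two_mul_add_one ℓ))
    rw [hb ℓ, Nat.mul_div_cancel' hdvd]
  have hL1' : ∀ ℓ, ((p : ℤ) + 1) * (b ℓ : ℤ) = (p : ℤ) ^ (2 * ℓ + 1) + 1 := by
    intro ℓ; exact_mod_cast congrArg (Nat.cast : ℕ → ℤ) (hL1 ℓ)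
  have hpne : ((p : ℤ) + 1) ≠ 0 := by positivity
  -- recurrence over ℤ
  have hrec : ∀ m, (b (m + 1) : ℤ) = (p : ℤ) ^ 2 * (b m : ℤ) - ((p : ℤ) - 1) := by
    intro m
    apply mul_left_cancel₀ hpne
    linear_combination hL1' (m + 1) - (p : ℤ) ^ 2 * hL1' m
  have hb0 : (b 0 : ℤ) = 1 := by
    have := hL1' 0
    have : ((p : ℤ) + 1) * (b 0 : ℤ) = ((p : ℤ) + 1) * 1 := by linear_combination this
    exact mul_left_cancel₀ hpne this
  -- key identity over ℤ
  have hI : ∀ m, (b m : ℤ) =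
      1 + ((p : ℤ) - 1) * ∑ ℓ ∈ Finset.range m, (b ℓ : ℤ) * (p : ℤ) ^ (m - ℓ) := by
    intro m
    induction m with
    | zero => simpa using hb0
    | succ m ih =>
      have hsum : ∑ ℓ ∈ Finset.range (m + 1), (b ℓ : ℤ) * (p : ℤ) ^ (m + 1 - ℓ)
          = (∑ ℓ ∈ Finset.range m, (b ℓ : ℤ) * (p : ℤ) ^ (m - ℓ)) * (p : ℤ)
            + (b m : ℤ) * (p : ℤ) := by
        rw [Finset.sum_range_succ, Finset.sum_mul]
        congr 1
        · apply Finset.sum_congr rfl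
          intro ℓ hℓ
          have hℓ' : ℓ < m := Finset.mem_range.mp hℓ
          have : m + 1 - ℓ = (m - ℓ) + 1 := by omega
          rw [this, pow_succ]; ring
        · simp
      rw [hsum, hrec m]
      linear_combination (p : ℤ) * ih
  -- main digit analysis
  set m := s - 1 with hm
  have hms : s = m + 1 := by omega
  have hPpos : 0 < p ^ m := Nat.pow_pos (by omega)
  set q := (j - 1) / p ^ m with hqdef
  have hqd : q % p < p - 1 := hsdig
  -- digits of j-1 below m are p-1
  have hdig : ∀ t, t < m → ((j - 1) / p ^ t) % p = p - 1 := by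
    intro t ht
    have := hsmin (t + 1) (by omega) (by omega)
    simpa using this
  -- (j-1) % p^m = p^m - 1
  have hmod : ∀ k, k ≤ m → (j - 1) % p ^ k = p ^ k - 1 := by
    intro k
    induction k with
    | zero => intro _; rw [pow_zero, Nat.mod_one]; rfl
    | succ k ih =>
      intro hk
      have hA : 1 ≤ p ^ k := Nat.pow_pos (by omega)
      have h1 : (j - 1) % p ^ (k + 1) = (j - 1) % p ^ k + p ^ k * ((j - 1) / p ^ k % p) := by
        rw [pow_succ, Nat.mod_mul]
      rw [h1, ih (by omega), hdig k (by omega)]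
      have h2 : p ^ k * (p - 1) = p ^ (k + 1) - p ^ k := by
        rw [Nat.mul_sub, pow_succ]; ring_nf
      have h3 : p ^ k ≤ p ^ (k + 1) := Nat.pow_le_pow_right (by omega) (by omega)
      omega
  have hmodm : (j - 1) % p ^ m = p ^ m - 1 := hmod m le_rfl
  -- j = (q+1) * p^m
  have hj : j = (q + 1) * p ^ m := by
    have := Nat.div_add_mod (j - 1) (p ^ m)
    rw [hmodm] at this
    have : j - 1 = p ^ m * q + (p ^ m - 1) := this.symm
    have h4 : j = p ^ m * q + p ^ m := by omega
    rw [h4]; ring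
  -- digits of j
  have hjlow : ∀ ℓ, ℓ < m → (j / p ^ ℓ) % p = 0 := by
    intro ℓ hℓ
    have h5 : j = ((q + 1) * p ^ (m - ℓ - 1) * p) * p ^ ℓ := by
      rw [hj]
      have : p ^ m = p ^ (m - ℓ - 1) * p * p ^ ℓ := by
        rw [← pow_succ, ← pow_add]
        congr 1
        omega
      rw [this]; ring
    rw [h5, Nat.mul_div_cancel _ (Nat.pow_pos (by omega)),
      Nat.mul_mod_left]
  have hq1 : (q + 1) % p = q % p + 1 := by
    have h1p : (1 : ℕ) % p = 1 := Nat.mod_eq_of_lt (by omega)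
    rw [Nat.add_mod, h1p]
    exact Nat.mod_eq_of_lt (by omega)
  have hjm : (j / p ^ m) % p = q % p + 1 := by
    rw [hj, Nat.mul_div_cancel _ hPpos, hq1]
  have hjhigh : ∀ ℓ, m < ℓ → j / p ^ ℓ = (j - 1) / p ^ ℓ := by
    intro ℓ hℓ
    have hsplit : p ^ ℓ = p ^ m * p ^ (ℓ - m) := by rw [← pow_add]; congr 1; omega
    have hl : j / p ^ ℓ = (q + 1) / p ^ (ℓ - m) := by
      rw [hj, hsplit, ← Nat.div_div_eq_div_mul, Nat.mul_div_cancel _ hPpos]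
    have hr : (j - 1) / p ^ ℓ = q / p ^ (ℓ - m) := by
      rw [hsplit, ← Nat.div_div_eq_div_mul, hqdef]
    rw [hl, hr]
    obtain ⟨k, hk⟩ : ∃ k, ℓ - m = k + 1 := ⟨ℓ - m - 1, by omega⟩
    rw [hk, pow_succ', ← Nat.div_div_eq_div_mul, ← Nat.div_div_eq_div_mul]
    congr 1
    apply Nat.succ_div_of_not_dvd
    intro hdvd
    have : (q + 1) % p = 0 := Nat.mod_eq_zero_of_dvd hdvd
    omega
  -- sum splitting
  have hmh : m < h := by omega
  have hsplitSum : ∀ f : ℕ → ℕ, ∑ ℓ ∈ Finset.range h, f ℓ =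
      (∑ ℓ ∈ Finset.range m, f ℓ) + f m + ∑ ℓ ∈ Finset.Ico (m + 1) h, f ℓ := by
    intro f
    rw [Finset.range_eq_Ico,
      ← Finset.sum_Ico_consecutive f (Nat.zero_le (m + 1)) (show m + 1 ≤ h by omega),
      Finset.sum_Ico_succ_top (Nat.zero_le m), ← Finset.range_eq_Ico]
  rw [hB j, hB (j - 1), hsplitSum, hsplitSum]
  -- tail sums equal
  have hTail : ∑ ℓ ∈ Finset.Ico (m + 1) h, ((j / p ^ ℓ) % p) * b ℓ * p ^ (h - 1 - ℓ)
      = ∑ ℓ ∈ Finset.Ico (m + 1) h, (((j - 1) / p ^ ℓ) % p) * b ℓ * p ^ (h - 1 - ℓ) := by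
    apply Finset.sum_congr rfl
    intro ℓ hℓ
    rw [hjhigh ℓ (by exact (Finset.mem_Ico.mp hℓ).1)]
  -- low digits
  have hLowj : ∑ ℓ ∈ Finset.range m, ((j / p ^ ℓ) % p) * b ℓ * p ^ (h - 1 - ℓ) = 0 := by
    apply Finset.sum_eq_zero
    intro ℓ hℓ
    rw [hjlow ℓ (Finset.mem_range.mp hℓ)]
    ring
  have hLowj1 : ∑ ℓ ∈ Finset.range m, (((j - 1) / p ^ ℓ) % p) * b ℓ * p ^ (h - 1 - ℓ)
      = (p - 1) * ∑ ℓ ∈ Finset.range m, b ℓ * p ^ (h - 1 - ℓ) := by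
    rw [Finset.mul_sum]
    apply Finset.sum_congr rfl
    intro ℓ hℓ
    rw [hdig ℓ (Finset.mem_range.mp hℓ)]
    ring
  rw [hTail, hLowj, hLowj1, hjm]
  -- key numeric identity
  have hF : b m * p ^ (h - 1 - m) =
      p ^ (h - 1 - m) + (p - 1) * ∑ ℓ ∈ Finset.range m, b ℓ * p ^ (h - 1 - ℓ) := by
    have hZ : (b m : ℤ) * (p : ℤ) ^ (h - 1 - m) =
        (p : ℤ) ^ (h - 1 - m)
          + ((p : ℤ) - 1) * ∑ ℓ ∈ Finset.range m, (b ℓ : ℤ) * (p : ℤ) ^ (h - 1 - ℓ) := by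
      have h6 : ∑ ℓ ∈ Finset.range m, (b ℓ : ℤ) * (p : ℤ) ^ (h - 1 - ℓ)
          = (∑ ℓ ∈ Finset.range m, (b ℓ : ℤ) * (p : ℤ) ^ (m - ℓ)) * (p : ℤ) ^ (h - 1 - m) := by
        rw [Finset.sum_mul]
        apply Finset.sum_congr rfl
        intro ℓ hℓ
        have hℓ' : ℓ < m := Finset.mem_range.mp hℓ
        rw [mul_assoc, ← pow_add]
        congr 2
        omega
      rw [h6]
      linear_combination (p : ℤ) ^ (h - 1 - m) * (hI m)
    have hcast : ((p : ℤ) - 1) = ((p - 1 : ℕ) : ℤ) := by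
      push_cast [Nat.cast_sub (by omega : 1 ≤ p)]; ring
    rw [hcast] at hZ
    exact_mod_cast hZ
  have hhs : h - s = h - 1 - m := by omega
  rw [hhs]
  set P := p ^ (h - 1 - m)
  set S := ∑ ℓ ∈ Finset.range m, b ℓ * p ^ (h - 1 - ℓ)
  set T := ∑ ℓ ∈ Finset.Ico (m + 1) h, (((j - 1) / p ^ ℓ) % p) * b ℓ * p ^ (h - 1 - ℓ)
  have hexp : (q % p + 1) * b m * P = q % p * b m * P + b m * P := by ring
  rw [hexp, hF]
  ring
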